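/- Let n ≥ 1, k > 0, α ∈ (0,1), and let x : [0,∞) → ℝⁿ be differentiable with x'(t) = -k·x(t)·‖x(t)‖^(α-1) whenever x(t) ≠ 0 and x'(t) = 0 whenever x(t) = 0. Then x(t) = 0 for all t ≥ ‖x(0)‖^(1-α)/(k·(1-α)). -/

import Mathlib

open scoped RealInnerProductSpace

/-- Finite-time stability of `ẋ = -k·x·‖x‖^(α-1)` on ℝⁿ (with `ẋ = 0` at the
origin): every solution vanishes for `t ≥ ‖x(0)‖^(1-α)/(k(1-α))`. -/
theorem stmt_4 (n : ℕ) (hn : 1 ≤ n) (k α : ℝ) (hk : 0 < k) (hα0 : 0 < α) (hα1 : α < 1)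
    (x : ℝ → EuclideanSpace ℝ (Fin n))
    (hx : ∀ t, 0 ≤ t → x t ≠ 0 →
      HasDerivAt x ((-k * ‖x t‖ ^ (α - 1)) • x t) t)
    (hx0 : ∀ t, 0 ≤ t → x t = 0 → HasDerivAt x 0 t) :
    ∀ t, ‖x 0‖ ^ (1 - α) / (k * (1 - α)) ≤ t → x t = 0 := by
  set c : ℝ := k * (1 - α) with hc
  have hcpos : 0 < c := mul_pos hk (by linarith)
  set v : ℝ → ℝ := fun s => ‖x s‖ ^ (1 - α) with hv
  have hα1' : (0:ℝ) < 1 - α := by linarith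
  -- v is nonnegative, and positive iff x ≠ 0
  have hvpos : ∀ s, x s ≠ 0 → 0 < v s := fun s hs =>
    Real.rpow_pos_of_pos (norm_pos_iff.mpr hs) _
  have hvzero : ∀ s, x s = 0 → v s = 0 := by
    intro s hs
    simp [hv, hs, Real.zero_rpow (ne_of_gt hα1')]
  -- x is continuous at every t ≥ 0
  have hxc : ∀ s, 0 ≤ s → ContinuousAt x s := by
    intro s hs
    by_cases h : x s = 0
    · exact (hx0 s hs h).continuousAt
    · exact (hx s hs h).continuousAt
  -- v is continuous at every t ≥ 0
  have hvc : ∀ s, 0 ≤ s → ContinuousAt v s := by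
    intro s hs
    exact (Real.continuousAt_rpow_const _ _ (Or.inr hα1'.le)).comp
      ((continuous_norm.continuousAt).comp (hxc s hs))
  -- derivative of v where x ≠ 0
  have hvderiv : ∀ s, 0 ≤ s → x s ≠ 0 → HasDerivAt v (-c) s := by
    intro s hs hne
    have hN : 0 < ‖x s‖ := norm_pos_iff.mpr hne
    have hd := hx s hs hne
    have hr : HasDerivAt (fun u => ⟪x u, x u⟫)
        (⟪x s, (-k * ‖x s‖ ^ (α - 1)) • x s⟫ + ⟪(-k * ‖x s‖ ^ (α - 1)) • x s, x s⟫) s :=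
      HasDerivAt.inner ℝ hd hd
    have hrval : (⟪x s, (-k * ‖x s‖ ^ (α - 1)) • x s⟫ + ⟪(-k * ‖x s‖ ^ (α - 1)) • x s, x s⟫ : ℝ)
        = 2 * (-k * ‖x s‖ ^ (α - 1)) * ‖x s‖ ^ (2:ℝ) := by
      rw [real_inner_smul_right, real_inner_smul_left, real_inner_self_eq_norm_sq,
        ← Real.rpow_natCast ‖x s‖ 2]
      push_cast
      ring
    rw [hrval] at hr
    have hrpos : (0:ℝ) < ⟪x s, x s⟫ := by
      rw [real_inner_self_eq_norm_sq]; positivity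
    have hpow : HasDerivAt (fun y : ℝ => y ^ ((1 - α)/2))
        (((1 - α)/2) * ⟪x s, x s⟫ ^ ((1 - α)/2 - 1)) ⟪x s, x s⟫ :=
      Real.hasDerivAt_rpow_const (Or.inl (ne_of_gt hrpos))
    have hcomp := hpow.comp s hr
    have heq : v = fun u => ⟪x u, x u⟫ ^ ((1 - α)/2) := by
      funext u
      rw [hv, real_inner_self_eq_norm_sq, ← Real.rpow_natCast ‖x u‖ 2,
        ← Real.rpow_mul (norm_nonneg _)]
      norm_num
      rw [show (2:ℝ) * ((1 - α)/2) = 1 - α by ring]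
    rw [heq]
    convert hcomp using 1
    case e'_4 => rfl
    case e'_5 => rfl
    case e'_8 => rfl
    rw [real_inner_self_eq_norm_sq, ← Real.rpow_natCast ‖x s‖ 2,
      ← Real.rpow_mul (norm_nonneg _)]
    push_cast
    rw [show (2:ℝ) * ((1 - α)/2 - 1) = -1 - α by ring]
    have e1 : ‖x s‖ ^ (-1 - α) * (‖x s‖ ^ (α - 1) * ‖x s‖ ^ (2:ℝ)) = 1 := by
      rw [← Real.rpow_add hN, ← Real.rpow_add hN,
        show (-1 - α + (α - 1 + 2)) = (0:ℝ) by ring, Real.rpow_zero]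
    calc -c = ((1 - α)/2) * (-k * 2) *
          (‖x s‖ ^ (-1 - α) * (‖x s‖ ^ (α - 1) * ‖x s‖ ^ (2:ℝ))) := by rw [e1]; ring
      _ = (1 - α)/2 * ‖x s‖ ^ (-1 - α) * (2 * (-k * ‖x s‖ ^ (α - 1)) * ‖x s‖ ^ (2:ℝ)) := by ring
  -- MVT: exact decay on intervals where x ≠ 0
  have step1 : ∀ a b, 0 ≤ a → a ≤ b → (∀ s ∈ Set.Icc a b, x s ≠ 0) →
      v b = v a - c * (b - a) := by
    intro a b ha hab hne
    rcases eq_or_lt_of_le hab with rfl | hlt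
    · ring
    · have hcont : ContinuousOn v (Set.Icc a b) := fun s hs =>
        (hvc s (le_trans ha hs.1)).continuousWithinAt
      have hderiv : ∀ s ∈ Set.Ioo a b, HasDerivAt v (-c) s := fun s hs =>
        hvderiv s (le_trans ha hs.1.le) (hne s ⟨hs.1.le, hs.2.le⟩)
      obtain ⟨m, hm, hslope⟩ := exists_hasDerivAt_eq_slope v (fun _ => -c) hlt hcont hderiv
      have hba : b - a ≠ 0 := ne_of_gt (by linarith)
      have hslope' : -c = (v b - v a) / (b - a) := hslope
      rw [eq_div_iff hba] at hslope'
      linear_combination -hslope'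
  -- forward invariance of 0
  have step3 : ∀ s t, 0 ≤ s → s ≤ t → x s = 0 → x t = 0 := by
    intro s t hs hst hxs
    by_contra hxt
    set S : Set ℝ := Set.Icc s t ∩ x ⁻¹' {0} with hS
    have hSne : S.Nonempty := ⟨s, ⟨le_refl s, hst⟩, hxs⟩
    have hSbdd : BddAbove S := ⟨t, fun u hu => hu.1.2⟩
    have hScl : IsClosed S := by
      have hcx : ContinuousOn x (Set.Icc s t) := fun u hu =>
        (hxc u (le_trans hs hu.1)).continuousWithinAt
      exact hcx.preimage_isClosed_of_isClosed isClosed_Icc isClosed_singleton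
    set m : ℝ := sSup S with hm
    have hmS : m ∈ S := hScl.csSup_mem hSne hSbdd
    have hms : s ≤ m := hmS.1.1
    have hmt : m ≤ t := hmS.1.2
    have hxm : x m = 0 := hmS.2
    have hm0 : 0 ≤ m := le_trans hs hms
    have hmlt : m < t := lt_of_le_of_ne hmt (fun h => hxt (h ▸ hxm))
    have hne : ∀ u, m < u → u ≤ t → x u ≠ 0 := by
      intro u hu1 hu2 hxu
      have : u ∈ S := ⟨⟨le_trans hms hu1.le, hu2⟩, hxu⟩
      exact absurd (le_csSup hSbdd this) (not_le.mpr hu1)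
    set d : ℝ := t - m with hd
    have hdpos : 0 < d := sub_pos.mpr hmlt
    -- pick ε with v (m + ε) small
    have hvm : v m = 0 := hvzero m hxm
    have hcont := hvc m hm0
    rw [ContinuousAt, hvm, Metric.tendsto_nhds] at hcont
    have hev := hcont (c * d / 2) (by positivity)
    rw [Metric.eventually_nhds_iff] at hev
    obtain ⟨δ, hδpos, hδ⟩ := hev
    set ε : ℝ := min (δ / 2) (d / 2) with hε
    have hεpos : 0 < ε := lt_min (by linarith) (by linarith)
    have hεd : ε ≤ d / 2 := min_le_right _ _
    have h1 : v (m + ε) < c * d / 2 := by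
      have hdist : dist (m + ε) m < δ := by
        rw [Real.dist_eq, add_sub_cancel_left, abs_of_nonneg hεpos.le]
        calc ε ≤ δ / 2 := min_le_left _ _
          _ < δ := by linarith
      have := hδ hdist
      rw [Real.dist_eq, sub_zero] at this
      exact lt_of_le_of_lt (le_abs_self _) this
    have h2 : v t = v (m + ε) - c * (t - (m + ε)) := by
      apply step1 (m + ε) t (by linarith) (by linarith)
      intro u hu
      exact hne u (by linarith [hu.1]) hu.2
    have h3 : 0 < v t := hvpos t hxt
    have h4 : c * d / 2 ≤ c * (t - (m + ε)) := by
      have : d / 2 ≤ t - (m + ε) := by simp only [hd] at *; linarith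
      calc c * d / 2 = c * (d / 2) := by ring
        _ ≤ c * (t - (m + ε)) := by nlinarith
    linarith
  -- main argument
  intro t ht
  have hv0 : (0:ℝ) ≤ ‖x 0‖ ^ (1 - α) := Real.rpow_nonneg (norm_nonneg _) _
  have ht0 : 0 ≤ t := le_trans (by positivity) ht
  by_cases hall : ∀ s ∈ Set.Icc (0:ℝ) t, x s ≠ 0
  · exfalso
    have := step1 0 t le_rfl ht0 hall
    have hvt : 0 < v t := hvpos t (hall t ⟨ht0, le_rfl⟩)
    have hct : v 0 ≤ c * t := by
      rw [div_le_iff₀ hcpos] at ht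
      calc v 0 = ‖x 0‖ ^ (1 - α) := rfl
        _ ≤ t * c := ht
        _ = c * t := by ring
    simp only [sub_zero] at this
    linarith [this]
  · push_neg at hall
    obtain ⟨s, hsI, hxs⟩ := hall
    exact step3 s t hsI.1 hsI.2 hxs
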